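/- Fix an integer p ≥ 1 and a real number x, and let Ω_n^(p)(y) be defined by Ω_0^(p)(y) = 1, Ω_1^(p)(y) = y − x + p/2, and Ω_{n+1}^(p)(y) = (y − x + p/2)·Ω_n^(p)(y) + (n(n+p−1)/4)·Ω_{n−1}^(p)(y) for n ≥ 1. Then for every n ≥ 0 and every real y, Ω_n^(p)(y) = (i^n n!/2^n) · P_n^{(p/2)}(−i(y − x + p/2); π/2), where the right-hand side is a complex expression whose value is real. -/

import Mathlib

open Polynomial

/-- The Pochhammer symbol `(a)_k = a (a+1) ⋯ (a+k-1)` for complex `a`. -/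
noncomputable def pochC (a : ℂ) (k : ℕ) : ℂ := ∏ i ∈ Finset.range k, (a + i)

/-- The Meixner–Pollaczek polynomial
`P_n^{(λ)}(y; φ) = ((2λ)_n / n!) e^{inφ}
  Σ_{k=0}^n [((-n)_k (λ + iy)_k) / ((2λ)_k k!)] (1 - e^{-2iφ})^k`. -/
noncomputable def meixnerPollaczek (n : ℕ) (lam φ : ℝ) (y : ℂ) : ℂ :=
  pochC (2 * lam) n / (n.factorial : ℂ) * Complex.exp ((n : ℂ) * φ * Complex.I) *
    ∑ k ∈ Finset.range (n + 1),
      pochC (-(n : ℂ)) k * pochC ((lam : ℂ) + Complex.I * y) k /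
        (pochC (2 * lam) k * (k.factorial : ℂ)) *
        (1 - Complex.exp (-(2 * (φ : ℂ) * Complex.I))) ^ k

lemma pochC_zero (a : ℂ) : pochC a 0 = 1 := Finset.prod_range_zero _

lemma pochC_succ (a : ℂ) (k : ℕ) : pochC a (k + 1) = pochC a k * (a + k) :=
  Finset.prod_range_succ _ _

lemma pochC_succ' (a : ℂ) (k : ℕ) : pochC a (k + 1) = a * pochC (a + 1) k := by
  unfold pochC
  rw [Finset.prod_range_succ']
  simp only [Nat.cast_zero, add_zero, mul_comm]
  congr 1
  apply Finset.prod_congr rfl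
  intro i _
  push_cast
  ring

lemma pochC_add (a : ℂ) (k m : ℕ) : pochC a (k + m) = pochC a k * pochC (a + k) m := by
  induction m with
  | zero => simp [pochC_zero]
  | succ m ih =>
      rw [← add_assoc, pochC_succ, ih, pochC_succ]
      push_cast
      ring

lemma pochC_nat_ne_zero (p k : ℕ) (hp : 1 ≤ p) : pochC (p : ℂ) k ≠ 0 := by
  rw [pochC, Finset.prod_ne_zero_iff]
  intro i _
  have : ((p + i : ℕ) : ℂ) ≠ 0 := Nat.cast_ne_zero.mpr (by omega)
  push_cast at this
  exact this

lemma pochC_neg_nat (n k : ℕ) (h : k ≤ n) :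
    pochC (-(n : ℂ)) k = (-1) ^ k * (n.choose k : ℂ) * (k.factorial : ℂ) := by
  induction k with
  | zero => simp [pochC_zero]
  | succ k ih =>
      rw [pochC_succ, ih (by omega)]
      have hk : k ≤ n := by omega
      have h1 : (-(n : ℂ) + k) = -(((n - k : ℕ) : ℂ)) := by
        push_cast [Nat.cast_sub hk]; ring
      rw [h1]
      have h2 : (n.choose (k+1) : ℂ) * (k+1) = (n.choose k : ℂ) * ((n - k : ℕ) : ℂ) := by
        exact_mod_cast congrArg (Nat.cast : ℕ → ℂ) (Nat.choose_succ_right_eq n k)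
      push_cast [Nat.factorial_succ] at *
      linear_combination (-1:ℂ)^k * k.factorial * h2

noncomputable def coefB (p n k : ℕ) : ℂ :=
  (n.choose k : ℂ) * pochC ((p : ℂ) + k) (n - k) * (-(2:ℂ)⁻¹) ^ (n - k)

lemma coefB_of_lt {p n k : ℕ} (h : n < k) : coefB p n k = 0 := by
  simp [coefB, Nat.choose_eq_zero_of_lt h]

-- binomial identities over ℂ
lemma chooseC_A (n k : ℕ) :
    ((k : ℂ) + 1) * ((n.choose (k+1) : ℕ) : ℂ) = ((n : ℂ) - k) * (n.choose k : ℂ) := by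
  rcases le_or_gt k n with h | h
  · have := Nat.choose_succ_right_eq n k
    have h2 : ((n.choose (k+1) * (k+1) : ℕ) : ℂ) = ((n.choose k * (n - k) : ℕ) : ℂ) :=
      congrArg (Nat.cast : ℕ → ℂ) this
    push_cast [Nat.cast_sub h] at h2
    linear_combination h2
  · simp [Nat.choose_eq_zero_of_lt h, Nat.choose_eq_zero_of_lt (by omega : n < k + 1)]

lemma chooseC_B (n k : ℕ) :
    ((n : ℂ) + 1) * (n.choose k : ℂ) = ((k : ℂ) + 1) * ((n+1).choose (k+1) : ℂ) := by
  have := Nat.add_one_mul_choose_eq n k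
  have h2 : (((n+1) * n.choose k : ℕ) : ℂ) = (((n+1).choose (k+1) * (k+1) : ℕ) : ℂ) :=
    congrArg (Nat.cast : ℕ → ℂ) this
  push_cast at h2
  linear_combination h2

lemma chooseC_C (n k : ℕ) (hn : 1 ≤ n) :
    (n : ℂ) * (((n-1).choose k : ℕ) : ℂ) = ((n : ℂ) - k) * (n.choose k : ℂ) := by
  obtain ⟨m, rfl⟩ : ∃ m, n = m + 1 := ⟨n - 1, by omega⟩
  have h1 := chooseC_B m k
  have h2 := chooseC_A (m+1) k
  simp only [Nat.add_sub_cancel]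
  push_cast at h1 h2 ⊢
  linear_combination h1 + h2

lemma coef_case_a (p j m : ℕ) :
    coefB p (j+m+2+1) (j+1) = coefB p (j+m+2) j
      - (((j:ℂ)+1) + (p:ℂ)/2) * coefB p (j+m+2) (j+1)
      + (((j+m+2 : ℕ) : ℂ) * (((j+m+2 : ℕ) : ℂ) + (p:ℂ) - 1) / 4) * coefB p (j+m+2-1) (j+1) := by
  unfold coefB
  rw [show j+m+2+1-(j+1) = m+2 from by omega, show j+m+2-j = m+2 from by omega,
      show j+m+2-(j+1) = m+1 from by omega, show j+m+2-1 = j+m+1 from by omega,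
      show j+m+1-(j+1) = m from by omega]
  rw [show m+2 = (m+1)+1 from rfl]
  rw [pochC_succ' ((p:ℂ)+((j:ℕ):ℂ)) (m+1)]
  rw [show ((p:ℂ)+((j:ℕ):ℂ))+1 = ((p:ℂ)+(((j+1):ℕ):ℂ)) from by push_cast; ring]
  rw [pochC_succ ((p:ℂ)+(((j+1):ℕ):ℂ)) (m+1)]
  rw [pochC_succ ((p:ℂ)+(((j+1):ℕ):ℂ)) m]
  generalize pochC ((p:ℂ)+(((j+1):ℕ):ℂ)) m = q
  have hP : (((j+m+2+1).choose (j+1) : ℕ) : ℂ)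
      = (((j+m+2).choose j : ℕ) : ℂ) + (((j+m+2).choose (j+1) : ℕ) : ℂ) := by
    exact_mod_cast congrArg (Nat.cast : ℕ → ℂ) (Nat.choose_succ_succ (j+m+2) j)
  have hA2 := chooseC_A (j+m+2) j
  have hC2 := chooseC_C (j+m+2) (j+1) (by omega)
  rw [show j+m+2-1 = j+m+1 from by omega] at hC2
  have hs2 : (-(2:ℂ)⁻¹)^(m+1) = (-(2:ℂ)⁻¹)^m * (-(2:ℂ)⁻¹) := pow_succ _ m
  have hs3 : (-(2:ℂ)⁻¹)^(m+1+1) = (-(2:ℂ)⁻¹)^m * (-(2:ℂ)⁻¹) * (-(2:ℂ)⁻¹) := by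
    rw [pow_succ, pow_succ]
  rw [hs2, hs3]
  push_cast at hP hA2 hC2 ⊢
  linear_combination (q*(-(2:ℂ)⁻¹)^m*((p:ℂ)+(j:ℂ)+1+m)*((p:ℂ)+(j:ℂ)+2+m)/4) * hP
    - (q*(-(2:ℂ)⁻¹)^m*((p:ℂ)+(j:ℂ)+1+m)/4) * hA2
    - (q*(-(2:ℂ)⁻¹)^m*((p:ℂ)+(j:ℂ)+1+m)/4) * hC2

lemma coef_rec (p n k : ℕ) (hn : 1 ≤ n) (hk : k ≤ n + 1) :
    coefB p (n+1) k = (if k = 0 then 0 else coefB p n (k-1))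
      - ((k:ℂ) + (p:ℂ)/2) * coefB p n k
      + ((n:ℂ) * ((n:ℂ) + (p:ℂ) - 1) / 4) * coefB p (n-1) k := by
  rcases k with _ | j
  · -- k = 0
    obtain ⟨m, rfl⟩ : ∃ m, n = m + 1 := ⟨n - 1, by omega⟩
    simp only [if_pos rfl, Nat.add_sub_cancel]
    unfold coefB
    simp only [Nat.choose_zero_right, Nat.sub_zero, Nat.cast_zero, Nat.cast_one]
    rw [show m+1+1 = (m+1)+1 from rfl, pochC_succ ((p:ℂ) + (0:ℂ)) (m+1),
        pochC_succ ((p:ℂ) + (0:ℂ)) m]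
    have hs2 : (-(2:ℂ)⁻¹)^(m+1) = (-(2:ℂ)⁻¹)^m * (-(2:ℂ)⁻¹) := pow_succ _ m
    have hs3 : (-(2:ℂ)⁻¹)^(m+1+1) = (-(2:ℂ)⁻¹)^m * (-(2:ℂ)⁻¹) * (-(2:ℂ)⁻¹) := by
      rw [pow_succ, pow_succ]
    rw [hs2, hs3]
    push_cast
    ring
  · -- k = j + 1
    simp only [if_neg (Nat.succ_ne_zero j), Nat.add_sub_cancel]
    rcases lt_trichotomy (j+1) n with h | h | h
    · obtain ⟨m, rfl⟩ : ∃ m, n = j + m + 2 := ⟨n - j - 2, by omega⟩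
      have := coef_case_a p j m
      push_cast at this ⊢
      convert this using 2
    · -- j + 1 = n
      subst h
      unfold coefB
      rw [show j+1+1-(j+1) = 1 from by omega, show j+1-j = 1 from by omega,
          show j+1-(j+1) = 0 from by omega, show j+1-1 = j from by omega]
      rw [show pochC ((p:ℂ)+((j+1:ℕ):ℂ)) 1 = pochC ((p:ℂ)+((j+1:ℕ):ℂ)) 0 * (((p:ℂ)+((j+1:ℕ):ℂ)) + ((0:ℕ):ℂ)) from pochC_succ ((p:ℂ)+((j+1:ℕ):ℂ)) 0,
          show pochC ((p:ℂ)+((j:ℕ):ℂ)) 1 = pochC ((p:ℂ)+((j:ℕ):ℂ)) 0 * (((p:ℂ)+((j:ℕ):ℂ)) + ((0:ℕ):ℂ)) from pochC_succ ((p:ℂ)+((j:ℕ):ℂ)) 0]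
      simp only [pochC_zero, Nat.choose_eq_zero_of_lt (by omega : j < j+1),
        Nat.choose_self, Nat.choose_succ_self_right, Nat.cast_zero]
      push_cast
      ring
    · -- j + 1 = n + 1, i.e. j = n
      have hj : j = n := by omega
      subst hj
      rw [coefB_of_lt (by omega : j < j + 1), coefB_of_lt (by omega : j - 1 < j + 1)]
      unfold coefB
      rw [show j+1-(j+1) = 0 from by omega, show j-j = 0 from by omega]
      simp [pochC_zero]

noncomputable def Spoly (p n : ℕ) (w : ℂ) : ℂ :=
  ∑ k ∈ Finset.range (n+1), coefB p n k * pochC w k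

lemma Spoly_ext (p n m : ℕ) (h : n + 1 ≤ m) (w : ℂ) :
    Spoly p n w = ∑ k ∈ Finset.range m, coefB p n k * pochC w k := by
  unfold Spoly
  apply Finset.sum_subset (Finset.range_subset_range.mpr h)
  intro k _ hk
  rw [coefB_of_lt (by simp at hk ⊢; omega), zero_mul]

lemma Spoly_rec (p n : ℕ) (hn : 1 ≤ n) (w : ℂ) :
    Spoly p (n+1) w = (w - (p:ℂ)/2) * Spoly p n w
      + ((n:ℂ) * ((n:ℂ) + (p:ℂ) - 1) / 4) * Spoly p (n-1) w := by
  have step1 : Spoly p (n+1) w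
      = ∑ k ∈ Finset.range (n+2),
          ((if k = 0 then (0:ℂ) else coefB p n (k-1)) * pochC w k
            - (((k:ℂ) + (p:ℂ)/2) * coefB p n k) * pochC w k
            + (((n:ℂ) * ((n:ℂ) + (p:ℂ) - 1) / 4) * coefB p (n-1) k) * pochC w k) := by
    apply Finset.sum_congr rfl
    intro k hk
    rw [coef_rec p n k hn (by simp at hk; omega)]
    ring
  rw [step1, Finset.sum_add_distrib, Finset.sum_sub_distrib]
  have e1 : ∑ k ∈ Finset.range (n+2),
      (if k = 0 then (0:ℂ) else coefB p n (k-1)) * pochC w k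
      = ∑ k ∈ Finset.range (n+1), coefB p n k * pochC w (k+1) := by
    rw [Finset.sum_range_succ']
    simp
  have e2 : ∑ k ∈ Finset.range (n+1), coefB p n k * pochC w (k+1)
      = (w - (p:ℂ)/2) * Spoly p n w
        + ∑ k ∈ Finset.range (n+1), (((k:ℂ) + (p:ℂ)/2) * coefB p n k) * pochC w k := by
    unfold Spoly
    rw [Finset.mul_sum, ← Finset.sum_add_distrib]
    apply Finset.sum_congr rfl
    intro k _
    rw [pochC_succ]
    ring
  have e3 : ∑ k ∈ Finset.range (n+2), (((k:ℂ) + (p:ℂ)/2) * coefB p n k) * pochC w k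
      = ∑ k ∈ Finset.range (n+1), (((k:ℂ) + (p:ℂ)/2) * coefB p n k) * pochC w k := by
    rw [Finset.sum_range_succ, coefB_of_lt (by omega : n < n+1)]
    ring
  have e4 : ∑ k ∈ Finset.range (n+2),
      (((n:ℂ) * ((n:ℂ) + (p:ℂ) - 1) / 4) * coefB p (n-1) k) * pochC w k
      = ((n:ℂ) * ((n:ℂ) + (p:ℂ) - 1) / 4) * Spoly p (n-1) w := by
    rw [Spoly_ext p (n-1) (n+2) (by omega) w, Finset.mul_sum]
    apply Finset.sum_congr rfl
    intro k _
    ring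
  rw [e1, e2, e3, e4]
  ring

lemma term_eq (p n k : ℕ) (hp : 1 ≤ p) (hk : k ≤ n) (w : ℂ) :
    Complex.I^n * (n.factorial : ℂ) / 2^n * (pochC (p:ℂ) n / (n.factorial : ℂ))
        * Complex.I^n *
      (pochC (-(n:ℂ)) k * pochC w k / (pochC (p:ℂ) k * (k.factorial : ℂ)) * 2^k)
    = coefB p n k * pochC w k := by
  obtain ⟨d, rfl⟩ : ∃ d, n = k + d := ⟨n - k, by omega⟩
  rw [pochC_neg_nat (k+d) k (by omega), pochC_add (p:ℂ) k d]
  unfold coefB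
  rw [Nat.add_sub_cancel_left]
  have hch : (((k+d).choose k : ℕ) : ℂ) * (k.factorial : ℂ) * (d.factorial : ℂ)
      = ((k+d).factorial : ℂ) := by
    exact_mod_cast congrArg (Nat.cast : ℕ → ℂ)
      (by simpa using Nat.choose_mul_factorial_mul_factorial (Nat.le_add_right k d))
  have hI : Complex.I^(k+d) * Complex.I^(k+d) = ((-1:ℂ))^(k+d) := by
    rw [← mul_pow, Complex.I_mul_I]
  have hne1 : pochC (p:ℂ) k ≠ 0 := pochC_nat_ne_zero p k hp
  have hne2 : ((k.factorial : ℕ) : ℂ) ≠ 0 := Nat.cast_ne_zero.mpr k.factorial_ne_zero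
  have hne3 : (((k+d).factorial : ℕ) : ℂ) ≠ 0 := Nat.cast_ne_zero.mpr (k+d).factorial_ne_zero
  have hne4 : (2:ℂ)^(k+d) ≠ 0 := pow_ne_zero _ two_ne_zero
  have hs : (-(2:ℂ)⁻¹)^d = ((-1:ℂ))^d * ((2:ℂ)^d)⁻¹ := by
    rw [neg_pow, inv_pow]
  rw [hs]
  have h2 : (2:ℂ)^(k+d) = 2^k * 2^d := pow_add 2 k d
  have hm1 : ((-1:ℂ))^(k+d) = (-1)^k * (-1)^d := pow_add (-1) k d
  have hIk : Complex.I ^ (k*2) = ((-1:ℂ))^k := by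
    rw [mul_comm k 2, pow_mul, Complex.I_sq]
  have hId : Complex.I ^ (d*2) = ((-1:ℂ))^d := by
    rw [mul_comm d 2, pow_mul, Complex.I_sq]
  have hkk : ((-1:ℂ))^k * (-1)^k = 1 := by rw [← mul_pow]; norm_num
  field_simp
  linear_combination (Complex.I^(d*2) * ((-1:ℂ))^k * (pochC ((p:ℂ)+k) d * (((k+d).choose k : ℕ) : ℂ) * pochC w k * 2^k * 2^d)) * hIk
    + (((-1:ℂ))^k * ((-1:ℂ))^k * (pochC ((p:ℂ)+k) d * (((k+d).choose k : ℕ) : ℂ) * pochC w k * 2^k * 2^d)) * hId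
    + (((-1:ℂ))^d * (pochC ((p:ℂ)+k) d * (((k+d).choose k : ℕ) : ℂ) * pochC w k * 2^k * 2^d)) * hkk

lemma MP_eq (p : ℕ) (hp : 1 ≤ p) (n : ℕ) (z : ℂ) :
    Complex.I ^ n * (n.factorial : ℂ) / 2 ^ n *
      meixnerPollaczek n ((p:ℝ)/2) (Real.pi/2) (-Complex.I * z)
    = Spoly p n (z + (p:ℂ)/2) := by
  unfold meixnerPollaczek
  have hlam : (2 * (((p:ℝ)/2 : ℝ) : ℂ)) = (p : ℂ) := by push_cast; ring
  have hexp1 : Complex.exp ((n:ℂ) * ((Real.pi/2 : ℝ) : ℂ) * Complex.I) = Complex.I ^ n := by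
    rw [mul_assoc, Complex.exp_nat_mul]
    congr 1
    rw [Complex.exp_mul_I, ← Complex.ofReal_cos, ← Complex.ofReal_sin,
      Real.cos_pi_div_two, Real.sin_pi_div_two]
    simp
  have hexp2 : (1 : ℂ) - Complex.exp (-(2 * ((Real.pi/2 : ℝ) : ℂ) * Complex.I)) = 2 := by
    have : (2 * ((Real.pi/2 : ℝ) : ℂ) * Complex.I) = (Real.pi : ℂ) * Complex.I := by
      push_cast; ring
    rw [this, Complex.exp_neg, Complex.exp_pi_mul_I]
    norm_num
  have hy : (((p:ℝ)/2 : ℝ) : ℂ) + Complex.I * (-Complex.I * z) = z + (p:ℂ)/2 := by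
    have hI : Complex.I * (-Complex.I * z) = z := by
      rw [← mul_assoc, mul_neg, Complex.I_mul_I]; ring
    rw [hI]; push_cast; ring
  rw [hlam, hexp1, hexp2, hy]
  rw [show Complex.I ^ n * (n.factorial : ℂ) / 2 ^ n *
      (pochC (p:ℂ) n / (n.factorial : ℂ) * Complex.I ^ n *
        ∑ k ∈ Finset.range (n + 1),
          pochC (-(n : ℂ)) k * pochC (z + (p:ℂ)/2) k /
            (pochC (p:ℂ) k * (k.factorial : ℂ)) * 2 ^ k)
    = ∑ k ∈ Finset.range (n + 1),
        Complex.I ^ n * (n.factorial : ℂ) / 2 ^ n * (pochC (p:ℂ) n / (n.factorial : ℂ))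
          * Complex.I ^ n *
          (pochC (-(n : ℂ)) k * pochC (z + (p:ℂ)/2) k /
            (pochC (p:ℂ) k * (k.factorial : ℂ)) * 2 ^ k) from by
      rw [Finset.mul_sum, Finset.mul_sum]
      apply Finset.sum_congr rfl
      intro k _
      ring]
  unfold Spoly
  apply Finset.sum_congr rfl
  intro k hk
  exact term_eq p n k hp (by simp at hk; omega) (z + (p:ℂ)/2)

lemma Spoly_zero (p : ℕ) (w : ℂ) : Spoly p 0 w = 1 := by
  simp [Spoly, coefB, pochC_zero]

lemma Spoly_one (p : ℕ) (w : ℂ) : Spoly p 1 w = w - (p:ℂ)/2 := by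
  unfold Spoly
  rw [Finset.sum_range_succ, Finset.sum_range_one]
  unfold coefB
  simp only [Nat.choose_self, Nat.choose_zero_right, Nat.sub_self, Nat.sub_zero,
    Nat.cast_one, pochC_zero]
  rw [show pochC ((p:ℂ) + ((0:ℕ):ℂ)) 1 = pochC ((p:ℂ) + ((0:ℕ):ℂ)) 0 * (((p:ℂ) + ((0:ℕ):ℂ)) + ((0:ℕ):ℂ)) from pochC_succ ((p:ℂ) + ((0:ℕ):ℂ)) 0,
    show pochC w 1 = pochC w 0 * (w + ((0:ℕ):ℂ)) from pochC_succ w 0,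
    pochC_zero, pochC_zero]
  push_cast
  ring

/-- the monic orthogonal polynomials `Ω_n^(p)` for the higher-order
Euler polynomials, defined through the three-term recurrence
`Ω_{n+1} = (y - x + p/2) Ω_n + (n(n+p-1)/4) Ω_{n-1}`, are given by
`Ω_n^(p)(y) = (i^n n!/2^n) P_n^{(p/2)}(-i(y - x + p/2); π/2)`. -/
theorem stmt_4 (p : ℕ) (hp : 1 ≤ p) (x : ℝ)
    (Ω : ℕ → ℝ → ℝ)
    (hΩ0 : ∀ y : ℝ, Ω 0 y = 1)
    (hΩ1 : ∀ y : ℝ, Ω 1 y = y - x + (p : ℝ) / 2)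
    (hΩrec : ∀ n : ℕ, 1 ≤ n → ∀ y : ℝ,
      Ω (n + 1) y = (y - x + (p : ℝ) / 2) * Ω n y
        + ((n : ℝ) * ((n : ℝ) + (p : ℝ) - 1) / 4) * Ω (n - 1) y) :
    ∀ (n : ℕ) (y : ℝ),
      (Ω n y : ℂ) = Complex.I ^ n * (n.factorial : ℂ) / 2 ^ n *
        meixnerPollaczek n ((p : ℝ) / 2) (Real.pi / 2)
          (-Complex.I * ((y : ℂ) - (x : ℂ) + (p : ℂ) / 2)) := by
  have main : ∀ (n : ℕ) (y : ℝ),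
      (Ω n y : ℂ) = Spoly p n (((y : ℂ) - (x : ℂ) + (p : ℂ)/2) + (p:ℂ)/2) := by
    intro n
    induction n using Nat.twoStepInduction with
    | zero => intro y; rw [hΩ0, Spoly_zero]; norm_num
    | one =>
        intro y
        rw [hΩ1, Spoly_one]
        push_cast
        ring
    | more n ih1 ih2 =>
        intro y
        have hrec := hΩrec (n+1) (by omega) y
        simp only [Nat.add_sub_cancel] at hrec
        rw [hrec]
        push_cast
        rw [ih1 y, ih2 y]
        have hS := Spoly_rec p (n+1) (by omega) (((y : ℂ) - (x : ℂ) + (p : ℂ)/2) + (p:ℂ)/2)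
        simp only [Nat.add_sub_cancel] at hS
        rw [hS]
        push_cast
        ring
  intro n y
  rw [main n y, MP_eq p hp n ((y : ℂ) - (x : ℂ) + (p : ℂ)/2)]
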